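/- Let l : ℝ → ℝ be C² and define f : {(u₁,u₂) ∈ ℝ² : u₁ > 0} → ℝ by f(u₁,u₂) = u₁ · l(u₂/u₁). Then for every u = (u₁,u₂) with u₁ > 0 and every v = (v₁,v₂) ∈ ℝ², the Hessian quadratic form of f satisfies ⟨v, Hess f(u) v⟩ = (v₁·(u₂/u₁) − v₂)² · l''(u₂/u₁)/u₁. In particular, if additionally l > 0 and l'' > 0 everywhere, then the Hessian of ½f² at u is positive definite: ⟨v, Hess(½f²)(u) v⟩ = (Df(u)v)² + f(u)·(v₁·(u₂/u₁) − v₂)²·l''(u₂/u₁)/u₁ > 0 for every v ≠ 0. -/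

import Mathlib

open ContinuousLinearMap Filter

/-- The positively 1-homogeneous extension of `l` to the half-plane `{u₁ > 0}`. -/
noncomputable def homogExt (l : ℝ → ℝ) (u : ℝ × ℝ) : ℝ := u.1 * l (u.2 / u.1)

namespace HomogAux

/-- derivative of w ↦ w.2 / w.1 -/
noncomputable def S (w : ℝ × ℝ) : ℝ × ℝ →L[ℝ] ℝ :=
  (w.1)⁻¹ • snd ℝ ℝ ℝ - (w.2 / w.1 ^ 2) • fst ℝ ℝ ℝ

lemma S_apply (w v : ℝ × ℝ) : S w v = (w.1)⁻¹ * v.2 - (w.2 / w.1 ^ 2) * v.1 := by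
  simp [S]

lemma hasFDerivAt_ratio {w : ℝ × ℝ} (hw : w.1 ≠ 0) :
    HasFDerivAt (fun w : ℝ × ℝ => w.2 / w.1) (S w) w := by
  have hinv : HasFDerivAt (fun w : ℝ × ℝ => (w.1)⁻¹)
      ((-(w.1 ^ 2)⁻¹) • fst ℝ ℝ ℝ) w :=
    (hasDerivAt_inv hw).comp_hasFDerivAt w hasFDerivAt_fst
  have h := (hasFDerivAt_snd (p := w)).mul hinv
  have heq : (Prod.snd * fun w : ℝ × ℝ => (w.1)⁻¹) = fun w : ℝ × ℝ => w.2 / w.1 := by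
    funext w; rw [Pi.mul_apply, div_eq_mul_inv]
  rw [heq] at h
  refine h.congr_fderiv ?_
  symm
  ext v <;> simp [S] <;> field_simp

variable (l : ℝ → ℝ)

/-- first derivative of `homogExt l` as a CLM -/
noncomputable def L (w : ℝ × ℝ) : ℝ × ℝ →L[ℝ] ℝ :=
  (l (w.2 / w.1) - (w.2 / w.1) * deriv l (w.2 / w.1)) • fst ℝ ℝ ℝ
    + (deriv l (w.2 / w.1)) • snd ℝ ℝ ℝ

lemma L_apply (w v : ℝ × ℝ) :
    L l w v = (l (w.2 / w.1) - (w.2 / w.1) * deriv l (w.2 / w.1)) * v.1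
      + deriv l (w.2 / w.1) * v.2 := by
  simp [L]

lemma hasFDerivAt_homog (hl : ContDiff ℝ 2 l) {w : ℝ × ℝ} (hw : w.1 ≠ 0) :
    HasFDerivAt (homogExt l) (L l w) w := by
  have hld : HasDerivAt l (deriv l (w.2 / w.1)) (w.2 / w.1) :=
    ((hl.differentiable (by norm_num)) (w.2 / w.1)).hasDerivAt
  have h1 : HasFDerivAt (fun w : ℝ × ℝ => l (w.2 / w.1))
      (deriv l (w.2 / w.1) • S w) w :=
    hld.comp_hasFDerivAt w (hasFDerivAt_ratio hw)
  have h := (hasFDerivAt_fst (p := w)).mul h1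
  rw [show homogExt l = (Prod.fst * fun w : ℝ × ℝ => l (w.2 / w.1)) from rfl]
  refine h.congr_fderiv ?_
  symm
  ext v <;>
    simp [L, S_apply, mul_comm] <;> field_simp <;> ring

end HomogAux

namespace HomogAux

variable (l : ℝ → ℝ)

/-- `fderiv (homogExt l) · v` as an explicit function -/
noncomputable def G (v w : ℝ × ℝ) : ℝ :=
  (l (w.2 / w.1) - (w.2 / w.1) * deriv l (w.2 / w.1)) * v.1
    + deriv l (w.2 / w.1) * v.2

lemma hasFDerivAt_G (hl : ContDiff ℝ 2 l) (v : ℝ × ℝ) {w : ℝ × ℝ} (hw : w.1 ≠ 0) :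
    HasFDerivAt (G l v)
      ((deriv (deriv l) (w.2 / w.1) * (v.2 - (w.2 / w.1) * v.1)) • S w) w := by
  have hdl1 : ContDiff ℝ 1 (deriv l) := by
    have := (contDiff_succ_iff_deriv (n := 1)).1 (by exact_mod_cast hl)
    exact this.2.2
  set y := w.2 / w.1 with hy
  have hld : HasDerivAt l (deriv l y) y :=
    ((hl.differentiable (by norm_num)) y).hasDerivAt
  have hdld : HasDerivAt (deriv l) (deriv (deriv l) y) y :=
    ((hdl1.differentiable (by norm_num)) y).hasDerivAt
  have hh : HasDerivAt (fun y => (l y - y * deriv l y) * v.1 + deriv l y * v.2)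
      (deriv (deriv l) y * (v.2 - y * v.1)) y := by
    have := (((hld.sub ((hasDerivAt_id y).mul hdld)).mul_const v.1).add
      (hdld.mul_const v.2))
    refine this.congr_deriv ?_
    simp only [id_eq, _root_.id]
    ring
  have := hh.comp_hasFDerivAt w (hasFDerivAt_ratio hw)
  exact this

end HomogAux

open HomogAux

theorem hessian_of_homogeneous_extension
    (l : ℝ → ℝ) (hl : ContDiff ℝ 2 l) :
    ∀ u : ℝ × ℝ, 0 < u.1 →
      (∀ v : ℝ × ℝ,
        fderiv ℝ (fun w => fderiv ℝ (homogExt l) w v) u v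
          = (v.1 * (u.2 / u.1) - v.2) ^ 2 * (deriv (deriv l) (u.2 / u.1) / u.1)) ∧
      ((∀ y, 0 < l y) → (∀ y, 0 < deriv (deriv l) y) →
        ∀ v : ℝ × ℝ, v ≠ 0 →
          fderiv ℝ (fun w => fderiv ℝ (fun z => (1 / 2) * (homogExt l z) ^ 2) w v) u v
            = (fderiv ℝ (homogExt l) u v) ^ 2
              + homogExt l u * (v.1 * (u.2 / u.1) - v.2) ^ 2
                * (deriv (deriv l) (u.2 / u.1) / u.1) ∧
          0 < fderiv ℝ (fun w => fderiv ℝ (fun z => (1 / 2) * (homogExt l z) ^ 2) w v) u v) := by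
  intro u hu
  have hu' : u.1 ≠ 0 := ne_of_gt hu
  have hU : {w : ℝ × ℝ | 0 < w.1} ∈ nhds u :=
    (isOpen_lt continuous_const continuous_fst).mem_nhds hu
  constructor
  · intro v
    have hev : (fun w => fderiv ℝ (homogExt l) w v) =ᶠ[nhds u] G l v := by
      filter_upwards [hU] with w hw
      rw [(hasFDerivAt_homog l hl (ne_of_gt hw)).fderiv]
      exact L_apply l w v
    rw [hev.fderiv_eq, (hasFDerivAt_G l hl v hu').fderiv]
    simp only [coe_smul', Pi.smul_apply, smul_eq_mul, S_apply]
    field_simp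
    ring
  · intro hlp hddlp v hv
    -- the squared function
    have hsq : (fun z => (1 / 2 : ℝ) * (homogExt l z) ^ 2)
        = fun z => (1 / 2 : ℝ) * (homogExt l z * homogExt l z) := by
      funext z; ring
    have hev2 : (fun w => fderiv ℝ (fun z => (1 / 2 : ℝ) * (homogExt l z) ^ 2) w v)
        =ᶠ[nhds u] (fun w => homogExt l w * G l v w) := by
      filter_upwards [hU] with w hw
      have hF := hasFDerivAt_homog l hl (ne_of_gt hw)
      have h := (hF.mul hF).const_mul (1 / 2 : ℝ)
      rw [hsq, show (fun z => (1 / 2 : ℝ) * (homogExt l z * homogExt l z))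
        = fun y => 1 / 2 * (homogExt l * homogExt l) y from rfl, h.fderiv]
      simp only [coe_smul', Pi.smul_apply, add_apply, smul_eq_mul, HomogAux.L_apply,
        HomogAux.G]
      ring
    have hFu := hasFDerivAt_homog l hl hu'
    have hGu := hasFDerivAt_G l hl v hu'
    have hP : HasFDerivAt (fun w => homogExt l w * G l v w)
        (homogExt l u • ((deriv (deriv l) (u.2 / u.1) * (v.2 - (u.2 / u.1) * v.1)) • S u)
          + G l v u • L l u) u := hFu.mul hGu
    have hEq : fderiv ℝ (fun w => fderiv ℝ (fun z => (1 / 2 : ℝ) * (homogExt l z) ^ 2) w v) u v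
        = (fderiv ℝ (homogExt l) u v) ^ 2
          + homogExt l u * (v.1 * (u.2 / u.1) - v.2) ^ 2
            * (deriv (deriv l) (u.2 / u.1) / u.1) := by
      rw [hev2.fderiv_eq, hP.fderiv, hFu.fderiv]
      simp only [add_apply, coe_smul', Pi.smul_apply, smul_eq_mul, S_apply,
        HomogAux.L_apply, HomogAux.G, homogExt]
      field_simp
      ring
    refine ⟨hEq, ?_⟩
    rw [hEq, hFu.fderiv, HomogAux.L_apply]
    set s := u.2 / u.1 with hs
    set b := v.1 * s - v.2 with hb
    have hr : 0 < deriv (deriv l) s / u.1 := div_pos (hddlp s) hu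
    have hhom : 0 < homogExt l u := mul_pos hu (hlp s)
    by_cases hb0 : b = 0
    · have hv2 : v.2 = v.1 * s := by rw [hb] at hb0; linarith
      have hv1 : v.1 ≠ 0 := by
        intro h1
        exact hv (Prod.ext_iff.mpr ⟨by simp [h1], by simp [hv2, h1]⟩)
      have hval : (l s - s * deriv l s) * v.1 + deriv l s * v.2 = l s * v.1 := by
        rw [hv2]; ring
      rw [hb0, hval]
      have : l s * v.1 ≠ 0 := mul_ne_zero (ne_of_gt (hlp s)) hv1
      have h2 : 0 < (l s * v.1) ^ 2 :=
        lt_of_le_of_ne (sq_nonneg _) (Ne.symm (pow_ne_zero 2 this))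
      nlinarith
    · have h2 : 0 < b ^ 2 :=
        lt_of_le_of_ne (sq_nonneg _) (Ne.symm (pow_ne_zero 2 hb0))
      have := mul_pos (mul_pos hhom h2) hr
      nlinarith [sq_nonneg ((l s - s * deriv l s) * v.1 + deriv l s * v.2)]
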